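/- Let X_1,…,X_T, Y_1,…,Y_T, U_1,…,U_T be finite-valued random processes on a common probability space satisfying, for each t ∈ {1,…,T}: (i) X^t and U_t are conditionally independent given (Y^t, U^{t−1}) (the control input is generated from the disclosed outputs and past inputs); and (ii) X_t and Y^{t−1} are conditionally independent given (X^{t−1}, U^{t−1}) (the plant state evolves from past states and inputs). Then I(X^T→U^T) ≤ I(X^T→Y^T‖U^{T−1}), i.e., Σ_{t=1}^T I(X^t; U_t | U^{t−1}) ≤ Σ_{t=1}^T I(X^t; Y_t | Y^{t−1}, U^{t−1}). -/

import Mathlib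

/-- The distribution of a random variable `X` on a finite probability space
with weights `p`. -/
noncomputable def distOf {Ω α : Type} [Fintype Ω] [DecidableEq α]
    (p : Ω → ℝ) (X : Ω → α) : α → ℝ :=
  fun a => ∑ ω : Ω, if X ω = a then p ω else 0

/-- Shannon entropy `H(X) = -∑ₓ P(X=x) log P(X=x)`. -/
noncomputable def entropy {Ω α : Type} [Fintype Ω] [Fintype α] [DecidableEq α]
    (p : Ω → ℝ) (X : Ω → α) : ℝ :=
  ∑ a : α, Real.negMulLog (distOf p X a)

/-- The conditional probability weights given the event `Z = z`. -/
noncomputable def condProb {Ω γ : Type} [Fintype Ω] [DecidableEq γ]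
    (p : Ω → ℝ) (Z : Ω → γ) (z : γ) : Ω → ℝ :=
  fun ω => if Z ω = z then p ω / distOf p Z z else 0

/-- Conditional entropy `H(X|Z) = ∑_z P(Z=z) H(X|Z=z)`. -/
noncomputable def condEntropy {Ω α γ : Type} [Fintype Ω] [Fintype α] [Fintype γ]
    [DecidableEq α] [DecidableEq γ] (p : Ω → ℝ) (X : Ω → α) (Z : Ω → γ) : ℝ :=
  ∑ z : γ, distOf p Z z * entropy (condProb p Z z) X

/-- Mutual information `I(X;Y) = H(X) - H(X|Y)`. -/
noncomputable def mutualInfo {Ω α β : Type} [Fintype Ω] [Fintype α] [Fintype β]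
    [DecidableEq α] [DecidableEq β] (p : Ω → ℝ) (X : Ω → α) (Y : Ω → β) : ℝ :=
  entropy p X - condEntropy p X Y

/-- Conditional mutual information `I(X;Y|Z) = ∑_z P(Z=z) I(X;Y|Z=z)`. -/
noncomputable def condMutualInfo {Ω α β γ : Type} [Fintype Ω] [Fintype α] [Fintype β]
    [Fintype γ] [DecidableEq α] [DecidableEq β] [DecidableEq γ]
    (p : Ω → ℝ) (X : Ω → α) (Y : Ω → β) (Z : Ω → γ) : ℝ :=
  ∑ z : γ, distOf p Z z * mutualInfo (condProb p Z z) X Y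

/-- Conditional independence of `A` and `B` given `C`:
`P(A=a,B=b,C=c) P(C=c) = P(A=a,C=c) P(B=b,C=c)` for all `a, b, c`. -/
def CondIndep {Ω α β γ : Type} [Fintype Ω] [DecidableEq α] [DecidableEq β] [DecidableEq γ]
    (p : Ω → ℝ) (A : Ω → α) (B : Ω → β) (C : Ω → γ) : Prop :=
  ∀ (a : α) (b : β) (c : γ),
    distOf p (fun ω => (A ω, B ω, C ω)) (a, b, c) * distOf p C c =
      distOf p (fun ω => (A ω, C ω)) (a, c) * distOf p (fun ω => (B ω, C ω)) (b, c)

/-- The block `X^t = (X_1, …, X_t)` of a process (0-based: the first `t` entries). -/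
def prefixRV {Ω 𝒳 : Type} (X : ℕ → Ω → 𝒳) (t : ℕ) : Ω → (Fin t → 𝒳) :=
  fun ω i => X i ω

set_option linter.unusedSectionVars false

section AuxStmt3

variable {Ω : Type} [Fintype Ω]

private lemma distOf_nonneg {α : Type} [DecidableEq α] {p : Ω → ℝ} (hp0 : ∀ ω, 0 ≤ p ω)
    (X : Ω → α) (a : α) : 0 ≤ distOf p X a := by
  unfold distOf
  exact Finset.sum_nonneg fun ω _ => by split <;> simp [hp0 ω]

private lemma le_distOf {α : Type} [DecidableEq α] {p : Ω → ℝ} (hp0 : ∀ ω, 0 ≤ p ω)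
    (X : Ω → α) (ω₀ : Ω) : p ω₀ ≤ distOf p X (X ω₀) := by
  have h := Finset.single_le_sum (f := fun ω => if X ω = X ω₀ then p ω else 0)
    (fun ω _ => by split <;> simp [hp0 ω]) (Finset.mem_univ ω₀)
  simpa [distOf] using h

private lemma sum_distOf_mul {α : Type} [DecidableEq α] [Fintype α] (p : Ω → ℝ) (X : Ω → α)
    (f : α → ℝ) : ∑ a : α, distOf p X a * f a = ∑ ω : Ω, p ω * f (X ω) := by
  unfold distOf
  simp only [Finset.sum_mul]
  rw [Finset.sum_comm]
  simp [ite_mul]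

private lemma sum_distOf (p : Ω → ℝ) {α : Type} [DecidableEq α] [Fintype α] (X : Ω → α) :
    ∑ a : α, distOf p X a = ∑ ω : Ω, p ω := by
  have h := sum_distOf_mul p X (fun _ => (1:ℝ))
  simpa using h

private lemma distOf_congr' {α β : Type} [DecidableEq α] [DecidableEq β] (p : Ω → ℝ)
    {W : Ω → α} {W' : Ω → β} {a : α} {b : β} (h : ∀ ω, W ω = a ↔ W' ω = b) :
    distOf p W a = distOf p W' b :=
  Finset.sum_congr rfl fun ω _ => if_congr (h ω) rfl rfl

private lemma distOf_pair_le {α γ : Type} [DecidableEq α] [DecidableEq γ] {p : Ω → ℝ}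
    (hp0 : ∀ ω, 0 ≤ p ω) (X : Ω → α) (Z : Ω → γ) (x : α) (z : γ) :
    distOf p (fun ω => (X ω, Z ω)) (x, z) ≤ distOf p Z z := by
  unfold distOf
  refine Finset.sum_le_sum fun ω _ => ?_
  by_cases h1 : X ω = x <;> by_cases h2 : Z ω = z <;> simp [h1, h2, Prod.ext_iff, hp0 ω]

private lemma sum_distOf_pair {α γ : Type} [DecidableEq α] [DecidableEq γ] [Fintype α]
    (p : Ω → ℝ) (X : Ω → α) (Z : Ω → γ) (z : γ) :
    ∑ x : α, distOf p (fun ω => (X ω, Z ω)) (x, z) = distOf p Z z := by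
  unfold distOf
  rw [Finset.sum_comm]
  refine Finset.sum_congr rfl fun ω _ => ?_
  by_cases h : Z ω = z <;> simp [Prod.ext_iff, h]

private lemma distOf_condProb {α γ : Type} [DecidableEq α] [DecidableEq γ] {p : Ω → ℝ}
    (Z : Ω → γ) (z : γ) (W : Ω → α) (w : α) :
    distOf (condProb p Z z) W w = distOf p (fun ω => (W ω, Z ω)) (w, z) / distOf p Z z := by
  unfold distOf condProb
  rw [Finset.sum_div]
  refine Finset.sum_congr rfl fun ω _ => ?_
  by_cases h1 : W ω = w <;> by_cases h2 : Z ω = z <;>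
    simp [h1, h2, Prod.ext_iff, zero_div, distOf]

end AuxStmt3

section AuxStmt3b

variable {Ω : Type} [Fintype Ω]

private lemma entropy_eq {α : Type} [DecidableEq α] [Fintype α] (p : Ω → ℝ) (X : Ω → α) :
    entropy p X = ∑ ω : Ω, p ω * (-Real.log (distOf p X (X ω))) := by
  unfold entropy
  rw [← sum_distOf_mul p X (fun a => -Real.log (distOf p X a))]
  refine Finset.sum_congr rfl fun a _ => ?_
  rw [Real.negMulLog]
  ring

private lemma condEntropy_eq {α γ : Type} [DecidableEq α] [DecidableEq γ] [Fintype α] [Fintype γ]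
    {p : Ω → ℝ} (hp0 : ∀ ω, 0 ≤ p ω) (X : Ω → α) (Z : Ω → γ) :
    condEntropy p X Z = ∑ ω : Ω, p ω * (-Real.log
      (distOf p (fun ω => (X ω, Z ω)) (X ω, Z ω) / distOf p Z (Z ω))) := by
  unfold condEntropy
  rw [← sum_distOf_mul p (fun ω => (X ω, Z ω))
    (fun a => -Real.log (distOf p (fun ω => (X ω, Z ω)) a / distOf p Z a.2))]
  rw [Fintype.sum_prod_type, Finset.sum_comm]
  refine Finset.sum_congr rfl fun z _ => ?_
  unfold entropy
  rw [Finset.mul_sum]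
  refine Finset.sum_congr rfl fun x _ => ?_
  rw [distOf_condProb]
  by_cases hc : distOf p Z z = 0
  · have hq : distOf p (fun ω => (X ω, Z ω)) (x, z) = 0 :=
      le_antisymm (hc ▸ distOf_pair_le hp0 X Z x z) (distOf_nonneg hp0 _ _)
    simp [hc, hq, Real.negMulLog]
  · rw [Real.negMulLog]
    field_simp

private lemma mutualInfo_eq {α β : Type} [DecidableEq α] [DecidableEq β] [Fintype α] [Fintype β]
    {p : Ω → ℝ} (hp0 : ∀ ω, 0 ≤ p ω) (X : Ω → α) (Y : Ω → β) :
    mutualInfo p X Y = ∑ ω : Ω, p ω * Real.log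
      (distOf p (fun ω => (X ω, Y ω)) (X ω, Y ω) /
        (distOf p X (X ω) * distOf p Y (Y ω))) := by
  unfold mutualInfo
  rw [entropy_eq, condEntropy_eq hp0, ← Finset.sum_sub_distrib]
  refine Finset.sum_congr rfl fun ω _ => ?_
  by_cases hp : p ω = 0
  · simp [hp]
  · have hpω : 0 < p ω := lt_of_le_of_ne (hp0 ω) (Ne.symm hp)
    have h1 : 0 < distOf p X (X ω) := lt_of_lt_of_le hpω (le_distOf hp0 X ω)
    have h2 : 0 < distOf p Y (Y ω) := lt_of_lt_of_le hpω (le_distOf hp0 Y ω)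
    have h3 : 0 < distOf p (fun ω => (X ω, Y ω)) (X ω, Y ω) :=
      lt_of_lt_of_le hpω (le_distOf hp0 (fun ω => (X ω, Y ω)) ω)
    rw [Real.log_div h3.ne' (mul_pos h1 h2).ne', Real.log_div h3.ne' h2.ne',
      Real.log_mul h1.ne' h2.ne']
    ring

private lemma condMutualInfo_eq {α β γ : Type} [DecidableEq α] [DecidableEq β] [DecidableEq γ]
    [Fintype α] [Fintype β] [Fintype γ]
    {p : Ω → ℝ} (hp0 : ∀ ω, 0 ≤ p ω) (X : Ω → α) (Y : Ω → β) (Z : Ω → γ) :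
    condMutualInfo p X Y Z = ∑ ω : Ω, p ω * Real.log
      (distOf p (fun ω => (X ω, Y ω, Z ω)) (X ω, Y ω, Z ω) * distOf p Z (Z ω) /
       (distOf p (fun ω => (X ω, Z ω)) (X ω, Z ω) *
        distOf p (fun ω => (Y ω, Z ω)) (Y ω, Z ω))) := by
  unfold condMutualInfo
  have key : ∀ z : γ, distOf p Z z * mutualInfo (condProb p Z z) X Y
      = ∑ ω : Ω, (if Z ω = z then p ω * Real.log
          (distOf p (fun ω => (X ω, Y ω, Z ω)) (X ω, Y ω, Z ω) * distOf p Z (Z ω) /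
           (distOf p (fun ω => (X ω, Z ω)) (X ω, Z ω) *
            distOf p (fun ω => (Y ω, Z ω)) (Y ω, Z ω))) else 0) := by
    intro z
    have hp0' : ∀ ω, 0 ≤ condProb p Z z ω := by
      intro ω
      unfold condProb
      split
      · exact div_nonneg (hp0 ω) (distOf_nonneg hp0 Z z)
      · exact le_refl 0
    rw [mutualInfo_eq hp0', Finset.mul_sum]
    refine Finset.sum_congr rfl fun ω _ => ?_
    by_cases h2 : Z ω = z
    · subst h2
      by_cases hpz : p ω = 0
      · simp [hpz, condProb]
      · have hpω : 0 < p ω := lt_of_le_of_ne (hp0 ω) (Ne.symm hpz)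
        have hc : 0 < distOf p Z (Z ω) := lt_of_lt_of_le hpω (le_distOf hp0 Z ω)
        have hcp : condProb p Z (Z ω) ω = p ω / distOf p Z (Z ω) := by
          unfold condProb; rw [if_pos rfl]
        rw [hcp, if_pos rfl]
        have hfold : distOf p Z (Z ω) * (p ω / distOf p Z (Z ω)) = p ω := by
          field_simp
        rw [← mul_assoc, hfold]
        congr 1
        -- equality of the log arguments
        rw [distOf_condProb Z (Z ω) (fun ω => (X ω, Y ω)) (X ω, Y ω),
          distOf_condProb Z (Z ω) X (X ω), distOf_condProb Z (Z ω) Y (Y ω)]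
        have e1 : distOf p (fun ω' => ((X ω', Y ω'), Z ω')) ((X ω, Y ω), Z ω)
            = distOf p (fun ω' => (X ω', Y ω', Z ω')) (X ω, Y ω, Z ω) := by
          refine distOf_congr' p fun ω' => ?_
          simp only [Prod.ext_iff]
          tauto
        rw [e1]
        have h3 : 0 < distOf p (fun ω' => (X ω', Y ω', Z ω')) (X ω, Y ω, Z ω) :=
          lt_of_lt_of_le hpω (le_distOf hp0 (fun ω' => (X ω', Y ω', Z ω')) ω)
        have h4 : 0 < distOf p (fun ω' => (X ω', Z ω')) (X ω, Z ω) :=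
          lt_of_lt_of_le hpω (le_distOf hp0 (fun ω' => (X ω', Z ω')) ω)
        have h5 : 0 < distOf p (fun ω' => (Y ω', Z ω')) (Y ω, Z ω) :=
          lt_of_lt_of_le hpω (le_distOf hp0 (fun ω' => (Y ω', Z ω')) ω)
        have hc' := hc.ne'
        have h4' := h4.ne'
        have h5' := h5.ne'
        congr 1
        field_simp
    · have hcp : condProb p Z z ω = 0 := by unfold condProb; rw [if_neg h2]
      rw [hcp, if_neg h2]
      ring
  rw [Finset.sum_congr rfl fun z _ => key z, Finset.sum_comm]
  refine Finset.sum_congr rfl fun ω _ => ?_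
  simp

end AuxStmt3b

section AuxStmt3c

variable {Ω : Type} [Fintype Ω]
variable {α β γ δ : Type} [DecidableEq α] [DecidableEq β] [DecidableEq γ] [DecidableEq δ]
variable [Fintype α] [Fintype β] [Fintype γ] [Fintype δ]

private lemma cmi_eq_zero_of_condIndep {p : Ω → ℝ} (hp0 : ∀ ω, 0 ≤ p ω)
    {X : Ω → α} {Y : Ω → β} {Z : Ω → γ} (h : CondIndep p X Y Z) :
    condMutualInfo p X Y Z = 0 := by
  rw [condMutualInfo_eq hp0]
  refine Finset.sum_eq_zero fun ω _ => ?_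
  rw [h (X ω) (Y ω) (Z ω)]
  rcases eq_or_ne (distOf p (fun ω' => (X ω', Z ω')) (X ω, Z ω) *
      distOf p (fun ω' => (Y ω', Z ω')) (Y ω, Z ω)) 0 with h0 | h0
  · simp [h0]
  · rw [div_self h0, Real.log_one, mul_zero]

private lemma cmi_eq_zero_of_subsingleton [Subsingleton α] {p : Ω → ℝ} (hp0 : ∀ ω, 0 ≤ p ω)
    (X : Ω → α) (Y : Ω → β) (Z : Ω → γ) : condMutualInfo p X Y Z = 0 := by
  rw [condMutualInfo_eq hp0]
  refine Finset.sum_eq_zero fun ω _ => ?_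
  have e1 : distOf p (fun ω' => (X ω', Y ω', Z ω')) (X ω, Y ω, Z ω)
      = distOf p (fun ω' => (Y ω', Z ω')) (Y ω, Z ω) := by
    refine distOf_congr' p fun ω' => ?_
    simp only [Prod.ext_iff]
    have := Subsingleton.elim (X ω') (X ω)
    tauto
  have e2 : distOf p (fun ω' => (X ω', Z ω')) (X ω, Z ω) = distOf p Z (Z ω) := by
    refine distOf_congr' p fun ω' => ?_
    simp only [Prod.ext_iff]
    have := Subsingleton.elim (X ω') (X ω)
    tauto
  rw [e1, e2, mul_comm (distOf p (fun ω' => (Y ω', Z ω')) (Y ω, Z ω)) (distOf p Z (Z ω))]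
  rcases eq_or_ne (distOf p Z (Z ω) * distOf p (fun ω' => (Y ω', Z ω')) (Y ω, Z ω)) 0 with h0 | h0
  · simp [h0]
  · rw [div_self h0, Real.log_one, mul_zero]

private lemma cmi_congr_snd {p : Ω → ℝ} (hp0 : ∀ ω, 0 ≤ p ω)
    (X : Ω → α) {Y : Ω → β} {Y' : Ω → δ} (Z : Ω → γ)
    (h : ∀ ω ω', Y ω = Y ω' ↔ Y' ω = Y' ω') :
    condMutualInfo p X Y Z = condMutualInfo p X Y' Z := by
  rw [condMutualInfo_eq hp0, condMutualInfo_eq hp0]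
  refine Finset.sum_congr rfl fun ω _ => ?_
  have e1 : distOf p (fun ω' => (X ω', Y ω', Z ω')) (X ω, Y ω, Z ω)
      = distOf p (fun ω' => (X ω', Y' ω', Z ω')) (X ω, Y' ω, Z ω) := by
    refine distOf_congr' p fun ω' => ?_
    simp only [Prod.ext_iff, h ω' ω]
  have e2 : distOf p (fun ω' => (Y ω', Z ω')) (Y ω, Z ω)
      = distOf p (fun ω' => (Y' ω', Z ω')) (Y' ω, Z ω) := by
    refine distOf_congr' p fun ω' => ?_
    simp only [Prod.ext_iff, h ω' ω]
  rw [e1, e2]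

private lemma cmi_congr_cond {p : Ω → ℝ} (hp0 : ∀ ω, 0 ≤ p ω)
    (X : Ω → α) (Y : Ω → β) {Z : Ω → γ} {Z' : Ω → δ}
    (h : ∀ ω ω', Z ω = Z ω' ↔ Z' ω = Z' ω') :
    condMutualInfo p X Y Z = condMutualInfo p X Y Z' := by
  rw [condMutualInfo_eq hp0, condMutualInfo_eq hp0]
  refine Finset.sum_congr rfl fun ω _ => ?_
  have e1 : distOf p (fun ω' => (X ω', Y ω', Z ω')) (X ω, Y ω, Z ω)
      = distOf p (fun ω' => (X ω', Y ω', Z' ω')) (X ω, Y ω, Z' ω) := by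
    refine distOf_congr' p fun ω' => ?_
    simp only [Prod.ext_iff, h ω' ω]
  have e2 : distOf p (fun ω' => (X ω', Z ω')) (X ω, Z ω)
      = distOf p (fun ω' => (X ω', Z' ω')) (X ω, Z' ω) := by
    refine distOf_congr' p fun ω' => ?_
    simp only [Prod.ext_iff, h ω' ω]
  have e3 : distOf p (fun ω' => (Y ω', Z ω')) (Y ω, Z ω)
      = distOf p (fun ω' => (Y ω', Z' ω')) (Y ω, Z' ω) := by
    refine distOf_congr' p fun ω' => ?_
    simp only [Prod.ext_iff, h ω' ω]
  have e4 : distOf p Z (Z ω) = distOf p Z' (Z' ω) :=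
    distOf_congr' p fun ω' => h ω' ω
  rw [e1, e2, e3, e4]

private lemma cmi_symm {p : Ω → ℝ} (hp0 : ∀ ω, 0 ≤ p ω)
    (X : Ω → α) (Y : Ω → β) (Z : Ω → γ) :
    condMutualInfo p X Y Z = condMutualInfo p Y X Z := by
  rw [condMutualInfo_eq hp0, condMutualInfo_eq hp0]
  refine Finset.sum_congr rfl fun ω _ => ?_
  have e1 : distOf p (fun ω' => (X ω', Y ω', Z ω')) (X ω, Y ω, Z ω)
      = distOf p (fun ω' => (Y ω', X ω', Z ω')) (Y ω, X ω, Z ω) := by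
    refine distOf_congr' p fun ω' => ?_
    simp only [Prod.ext_iff]
    tauto
  rw [e1, mul_comm (distOf p (fun ω' => (X ω', Z ω')) (X ω, Z ω))
    (distOf p (fun ω' => (Y ω', Z ω')) (Y ω, Z ω))]

private lemma cmi_chain {p : Ω → ℝ} (hp0 : ∀ ω, 0 ≤ p ω)
    (A : Ω → α) (B : Ω → β) (C : Ω → γ) (Z : Ω → δ) :
    condMutualInfo p A (fun ω => (B ω, C ω)) Z =
      condMutualInfo p A C Z + condMutualInfo p A B (fun ω => (C ω, Z ω)) := by
  rw [condMutualInfo_eq hp0, condMutualInfo_eq hp0, condMutualInfo_eq hp0,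
    ← Finset.sum_add_distrib]
  refine Finset.sum_congr rfl fun ω _ => ?_
  by_cases hp : p ω = 0
  · simp [hp]
  have hpω : 0 < p ω := lt_of_le_of_ne (hp0 ω) (Ne.symm hp)
  have e1 : distOf p (fun ω' => (A ω', (B ω', C ω'), Z ω')) (A ω, (B ω, C ω), Z ω)
      = distOf p (fun ω' => (A ω', B ω', C ω', Z ω')) (A ω, B ω, C ω, Z ω) := by
    refine distOf_congr' p fun ω' => ?_
    simp only [Prod.ext_iff]
    tauto
  have e2 : distOf p (fun ω' => ((B ω', C ω'), Z ω')) ((B ω, C ω), Z ω)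
      = distOf p (fun ω' => (B ω', C ω', Z ω')) (B ω, C ω, Z ω) := by
    refine distOf_congr' p fun ω' => ?_
    simp only [Prod.ext_iff]
    tauto
  rw [e1, e2]
  have hq : 0 < distOf p (fun ω' => (A ω', B ω', C ω', Z ω')) (A ω, B ω, C ω, Z ω) :=
    lt_of_lt_of_le hpω (le_distOf hp0 (fun ω' => (A ω', B ω', C ω', Z ω')) ω)
  have hc : 0 < distOf p Z (Z ω) := lt_of_lt_of_le hpω (le_distOf hp0 Z ω)
  have hr : 0 < distOf p (fun ω' => (A ω', Z ω')) (A ω, Z ω) :=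
    lt_of_lt_of_le hpω (le_distOf hp0 (fun ω' => (A ω', Z ω')) ω)
  have hs : 0 < distOf p (fun ω' => (B ω', C ω', Z ω')) (B ω, C ω, Z ω) :=
    lt_of_lt_of_le hpω (le_distOf hp0 (fun ω' => (B ω', C ω', Z ω')) ω)
  have ht : 0 < distOf p (fun ω' => (A ω', C ω', Z ω')) (A ω, C ω, Z ω) :=
    lt_of_lt_of_le hpω (le_distOf hp0 (fun ω' => (A ω', C ω', Z ω')) ω)
  have hu : 0 < distOf p (fun ω' => (C ω', Z ω')) (C ω, Z ω) :=
    lt_of_lt_of_le hpω (le_distOf hp0 (fun ω' => (C ω', Z ω')) ω)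
  rw [← mul_add, ← Real.log_mul
    (ne_of_gt (div_pos (mul_pos ht hc) (mul_pos hr hu)))
    (ne_of_gt (div_pos (mul_pos hq hu) (mul_pos ht hs)))]
  congr 1
  have hq' := hq.ne'
  have hc' := hc.ne'
  have hr' := hr.ne'
  have hs' := hs.ne'
  have ht' := ht.ne'
  have hu' := hu.ne'
  field_simp

end AuxStmt3c

section AuxStmt3d

variable {Ω : Type} [Fintype Ω]
variable {α β γ : Type} [DecidableEq α] [DecidableEq β] [DecidableEq γ]
variable [Fintype α] [Fintype β] [Fintype γ]

private lemma cmi_nonneg {p : Ω → ℝ} (hp0 : ∀ ω, 0 ≤ p ω) (hp1 : ∑ ω, p ω = 1)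
    (X : Ω → α) (Y : Ω → β) (Z : Ω → γ) : 0 ≤ condMutualInfo p X Y Z := by
  classical
  set g : α × β × γ → ℝ := fun a =>
    distOf p (fun ω => (X ω, Z ω)) (a.1, a.2.2) * distOf p (fun ω => (Y ω, Z ω)) (a.2.1, a.2.2) /
      (distOf p (fun ω => (X ω, Y ω, Z ω)) a * distOf p Z a.2.2) with hg
  -- the total "cross mass" is at most 1
  have hsum : ∑ ω : Ω, p ω * g (X ω, Y ω, Z ω) ≤ 1 := by
    rw [← sum_distOf_mul p (fun ω => (X ω, Y ω, Z ω)) g]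
    have step1 : ∀ a : α × β × γ, distOf p (fun ω => (X ω, Y ω, Z ω)) a * g a ≤
        distOf p (fun ω => (X ω, Z ω)) (a.1, a.2.2) *
          distOf p (fun ω => (Y ω, Z ω)) (a.2.1, a.2.2) * (distOf p Z a.2.2)⁻¹ := by
      intro a
      rcases eq_or_ne (distOf p (fun ω => (X ω, Y ω, Z ω)) a) 0 with h0 | h0
      · rw [h0, zero_mul]
        have := distOf_nonneg hp0 (fun ω => (X ω, Z ω)) (a.1, a.2.2)
        have := distOf_nonneg hp0 (fun ω => (Y ω, Z ω)) (a.2.1, a.2.2)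
        have := distOf_nonneg hp0 Z a.2.2
        positivity
      · refine le_of_eq ?_
        rcases eq_or_ne (distOf p Z a.2.2) 0 with hz | hz
        · simp [hg, hz]
        · rw [hg]
          field_simp
    refine le_trans (Finset.sum_le_sum fun a _ => step1 a) ?_
    have e1 : ∑ a : α × β × γ, distOf p (fun ω => (X ω, Z ω)) (a.1, a.2.2) *
          distOf p (fun ω => (Y ω, Z ω)) (a.2.1, a.2.2) * (distOf p Z a.2.2)⁻¹
        = ∑ z : γ, ∑ x : α, ∑ y : β, distOf p (fun ω => (X ω, Z ω)) (x, z) *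
            distOf p (fun ω => (Y ω, Z ω)) (y, z) * (distOf p Z z)⁻¹ := by
      rw [Fintype.sum_prod_type]
      simp_rw [Fintype.sum_prod_type]
      have e0 : ∀ x : α, (∑ y : β, ∑ z : γ, distOf p (fun ω => (X ω, Z ω)) (x, z) *
            distOf p (fun ω => (Y ω, Z ω)) (y, z) * (distOf p Z z)⁻¹)
          = ∑ z : γ, ∑ y : β, distOf p (fun ω => (X ω, Z ω)) (x, z) *
            distOf p (fun ω => (Y ω, Z ω)) (y, z) * (distOf p Z z)⁻¹ :=
        fun x => Finset.sum_comm
      simp_rw [e0]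
      exact Finset.sum_comm
    rw [e1]
    have e2 : ∀ z : γ, (∑ x : α, ∑ y : β, distOf p (fun ω => (X ω, Z ω)) (x, z) *
          distOf p (fun ω => (Y ω, Z ω)) (y, z) * (distOf p Z z)⁻¹)
        = distOf p Z z * distOf p Z z * (distOf p Z z)⁻¹ := by
      intro z
      have einner : ∀ x : α, (∑ y : β, distOf p (fun ω => (X ω, Z ω)) (x, z) *
            distOf p (fun ω => (Y ω, Z ω)) (y, z) * (distOf p Z z)⁻¹)
          = distOf p (fun ω => (X ω, Z ω)) (x, z) *
            ((∑ y : β, distOf p (fun ω => (Y ω, Z ω)) (y, z)) * (distOf p Z z)⁻¹) := by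
        intro x
        simp_rw [mul_assoc, ← Finset.mul_sum, Finset.sum_mul]
      simp_rw [einner]
      rw [← Finset.sum_mul, sum_distOf_pair p X Z z, sum_distOf_pair p Y Z z, ← mul_assoc]
    rw [Finset.sum_congr rfl fun z _ => e2 z]
    have hfin : ∑ z : γ, distOf p Z z * distOf p Z z * (distOf p Z z)⁻¹ ≤ ∑ z : γ, distOf p Z z := by
      refine Finset.sum_le_sum fun z _ => ?_
      rcases eq_or_ne (distOf p Z z) 0 with h | h
      · simp [h]
      · rw [mul_inv_cancel_right₀ h]
    rw [sum_distOf p Z, hp1] at hfin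
    exact hfin
  -- pointwise lower bound by 1 - g
  rw [condMutualInfo_eq hp0]
  have main : ∀ ω : Ω, p ω - p ω * g (X ω, Y ω, Z ω) ≤ p ω * Real.log
      (distOf p (fun ω => (X ω, Y ω, Z ω)) (X ω, Y ω, Z ω) * distOf p Z (Z ω) /
       (distOf p (fun ω => (X ω, Z ω)) (X ω, Z ω) *
        distOf p (fun ω => (Y ω, Z ω)) (Y ω, Z ω))) := by
    intro ω
    rcases eq_or_ne (p ω) 0 with h | h
    · simp [h]
    · have hpω : 0 < p ω := lt_of_le_of_ne (hp0 ω) (Ne.symm h)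
      have h1 : 0 < distOf p (fun ω' => (X ω', Y ω', Z ω')) (X ω, Y ω, Z ω) :=
        lt_of_lt_of_le hpω (le_distOf hp0 (fun ω' => (X ω', Y ω', Z ω')) ω)
      have h2 : 0 < distOf p Z (Z ω) := lt_of_lt_of_le hpω (le_distOf hp0 Z ω)
      have h3 : 0 < distOf p (fun ω' => (X ω', Z ω')) (X ω, Z ω) :=
        lt_of_lt_of_le hpω (le_distOf hp0 (fun ω' => (X ω', Z ω')) ω)
      have h4 : 0 < distOf p (fun ω' => (Y ω', Z ω')) (Y ω, Z ω) :=
        lt_of_lt_of_le hpω (le_distOf hp0 (fun ω' => (Y ω', Z ω')) ω)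
      have hE : 0 < distOf p (fun ω' => (X ω', Y ω', Z ω')) (X ω, Y ω, Z ω) * distOf p Z (Z ω) /
          (distOf p (fun ω' => (X ω', Z ω')) (X ω, Z ω) *
           distOf p (fun ω' => (Y ω', Z ω')) (Y ω, Z ω)) :=
        div_pos (mul_pos h1 h2) (mul_pos h3 h4)
      have hlog := Real.log_le_sub_one_of_pos (inv_pos.2 hE)
      rw [Real.log_inv] at hlog
      have hginv : (distOf p (fun ω' => (X ω', Y ω', Z ω')) (X ω, Y ω, Z ω) * distOf p Z (Z ω) /
          (distOf p (fun ω' => (X ω', Z ω')) (X ω, Z ω) *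
           distOf p (fun ω' => (Y ω', Z ω')) (Y ω, Z ω)))⁻¹ = g (X ω, Y ω, Z ω) := by
        rw [hg, inv_div]
      rw [← hginv]
      nlinarith [hpω, hlog]
  have hle : ∑ ω : Ω, (p ω - p ω * g (X ω, Y ω, Z ω)) ≤ _ := Finset.sum_le_sum fun ω _ => main ω
  rw [Finset.sum_sub_distrib, hp1] at hle
  linarith

end AuxStmt3d

section AuxStmt3e

variable {Ω : Type} [Fintype Ω]

private lemma prefix_iff {𝒳 : Type} (X : ℕ → Ω → 𝒳) (s : ℕ) (ω ω' : Ω) :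
    prefixRV X (s + 1) ω = prefixRV X (s + 1) ω' ↔
      (X s ω, prefixRV X s ω) = (X s ω', prefixRV X s ω') := by
  simp only [prefixRV, Prod.ext_iff, funext_iff]
  constructor
  · intro h
    exact ⟨h ⟨s, Nat.lt_succ_self s⟩, fun i => h ⟨i, Nat.lt_succ_of_lt i.isLt⟩⟩
  · rintro ⟨h1, h2⟩ i
    rcases Nat.lt_or_ge (i : ℕ) s with hi | hi
    · exact h2 ⟨i, hi⟩
    · have his : (i : ℕ) = s := by omega
      rw [his]
      exact h1

private lemma key_step {𝒳 𝒴 𝒰 : Type} [Fintype 𝒳] [Fintype 𝒴] [Fintype 𝒰]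
    [DecidableEq 𝒳] [DecidableEq 𝒴] [DecidableEq 𝒰]
    {p : Ω → ℝ} (hp0 : ∀ ω, 0 ≤ p ω)
    (X : ℕ → Ω → 𝒳) (Y : ℕ → Ω → 𝒴) (U : ℕ → Ω → 𝒰) (s : ℕ)
    (hc : CondIndep p (prefixRV X (s + 1)) (U s)
      (fun ω => (prefixRV Y (s + 1) ω, prefixRV U s ω))) :
    condMutualInfo p (prefixRV X (s + 1)) (U s) (prefixRV U s) =
      condMutualInfo p (prefixRV X (s + 1)) (prefixRV Y s) (prefixRV U s) +
      condMutualInfo p (prefixRV X (s + 1)) (Y s)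
        (fun ω => (prefixRV Y s ω, prefixRV U s ω)) -
      condMutualInfo p (prefixRV X (s + 1)) (prefixRV Y (s + 1)) (prefixRV U (s + 1)) := by
  have h1 := cmi_chain hp0 (prefixRV X (s + 1)) (U s) (prefixRV Y (s + 1)) (prefixRV U s)
  have h2 : condMutualInfo p (prefixRV X (s + 1)) (U s)
      (fun ω => (prefixRV Y (s + 1) ω, prefixRV U s ω)) = 0 :=
    cmi_eq_zero_of_condIndep hp0 hc
  have h3 := cmi_chain hp0 (prefixRV X (s + 1)) (prefixRV Y (s + 1)) (U s) (prefixRV U s)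
  have h4 : condMutualInfo p (prefixRV X (s + 1))
        (fun ω => (U s ω, prefixRV Y (s + 1) ω)) (prefixRV U s) =
      condMutualInfo p (prefixRV X (s + 1))
        (fun ω => (prefixRV Y (s + 1) ω, U s ω)) (prefixRV U s) := by
    refine cmi_congr_snd hp0 _ _ fun ω ω' => ?_
    simp only [Prod.ext_iff]
    tauto
  have h5 : condMutualInfo p (prefixRV X (s + 1)) (prefixRV Y (s + 1))
        (fun ω => (U s ω, prefixRV U s ω)) =
      condMutualInfo p (prefixRV X (s + 1)) (prefixRV Y (s + 1)) (prefixRV U (s + 1)) :=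
    cmi_congr_cond hp0 _ _ fun ω ω' => (prefix_iff U s ω ω').symm
  have h6 : condMutualInfo p (prefixRV X (s + 1)) (prefixRV Y (s + 1)) (prefixRV U s) =
      condMutualInfo p (prefixRV X (s + 1)) (fun ω => (Y s ω, prefixRV Y s ω))
        (prefixRV U s) :=
    cmi_congr_snd hp0 _ _ fun ω ω' => prefix_iff Y s ω ω'
  have h7 := cmi_chain hp0 (prefixRV X (s + 1)) (Y s) (prefixRV Y s) (prefixRV U s)
  linarith

private lemma bprime_step {𝒳 𝒴 𝒰 : Type} [Fintype 𝒳] [Fintype 𝒴] [Fintype 𝒰]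
    [DecidableEq 𝒳] [DecidableEq 𝒴] [DecidableEq 𝒰]
    {p : Ω → ℝ} (hp0 : ∀ ω, 0 ≤ p ω)
    (X : ℕ → Ω → 𝒳) (Y : ℕ → Ω → 𝒴) (U : ℕ → Ω → 𝒰) (s : ℕ)
    (hpl : CondIndep p (X s) (prefixRV Y s)
      (fun ω => (prefixRV X s ω, prefixRV U s ω))) :
    condMutualInfo p (prefixRV X (s + 1)) (prefixRV Y s) (prefixRV U s) =
      condMutualInfo p (prefixRV X s) (prefixRV Y s) (prefixRV U s) := by
  have hb1 := cmi_symm hp0 (prefixRV X (s + 1)) (prefixRV Y s) (prefixRV U s)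
  have hb2 : condMutualInfo p (prefixRV Y s) (prefixRV X (s + 1)) (prefixRV U s) =
      condMutualInfo p (prefixRV Y s) (fun ω => (X s ω, prefixRV X s ω)) (prefixRV U s) :=
    cmi_congr_snd hp0 _ _ fun ω ω' => prefix_iff X s ω ω'
  have hb3 := cmi_chain hp0 (prefixRV Y s) (X s) (prefixRV X s) (prefixRV U s)
  have hb4 := cmi_symm hp0 (prefixRV Y s) (X s)
    (fun ω => (prefixRV X s ω, prefixRV U s ω))
  have hb5 : condMutualInfo p (X s) (prefixRV Y s)
      (fun ω => (prefixRV X s ω, prefixRV U s ω)) = 0 :=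
    cmi_eq_zero_of_condIndep hp0 hpl
  have hb6 := cmi_symm hp0 (prefixRV Y s) (prefixRV X s) (prefixRV U s)
  linarith

end AuxStmt3e

/-- Under the feedback structure of cloud-based control
(for each stage `t`: (i) `X^t ⟂ U_t | (Y^t, U^{t-1})` and
(ii) `X_t ⟂ Y^{t-1} | (X^{t-1}, U^{t-1})`), the directed information is bounded by
the causally conditioned directed information:
`I(X^T → U^T) ≤ I(X^T → Y^T ‖ U^{T-1})`.
(0-based indexing: stage `t + 1` of the paper corresponds to index `t` here, and
`prefixRV X t` is the block `X^t` of the first `t` entries.) -/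
theorem stmt3 {Ω 𝒳 𝒴 𝒰 : Type} [Fintype Ω] [Fintype 𝒳] [Fintype 𝒴] [Fintype 𝒰]
    [DecidableEq 𝒳] [DecidableEq 𝒴] [DecidableEq 𝒰]
    (p : Ω → ℝ) (hp0 : ∀ ω, 0 ≤ p ω) (hp1 : ∑ ω, p ω = 1)
    (T : ℕ) (X : ℕ → Ω → 𝒳) (Y : ℕ → Ω → 𝒴) (U : ℕ → Ω → 𝒰)
    (hcontrol : ∀ t < T, CondIndep p (prefixRV X (t + 1)) (U t)
      (fun ω => (prefixRV Y (t + 1) ω, prefixRV U t ω)))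
    (hplant : ∀ t < T, CondIndep p (X t) (prefixRV Y t)
      (fun ω => (prefixRV X t ω, prefixRV U t ω))) :
    ∑ t ∈ Finset.range T,
        condMutualInfo p (prefixRV X (t + 1)) (U t) (prefixRV U t) ≤
      ∑ t ∈ Finset.range T,
        condMutualInfo p (prefixRV X (t + 1)) (Y t)
          (fun ω => (prefixRV Y t ω, prefixRV U t ω)) := by
  classical
  set b : ℕ → ℝ := fun s =>
    condMutualInfo p (prefixRV X s) (prefixRV Y s) (prefixRV U s) with hb
  have key : ∀ t ∈ Finset.range T,
      condMutualInfo p (prefixRV X (t + 1)) (U t) (prefixRV U t) =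
        condMutualInfo p (prefixRV X (t + 1)) (Y t)
          (fun ω => (prefixRV Y t ω, prefixRV U t ω)) + (b t - b (t + 1)) := by
    intro t ht
    have ht' : t < T := Finset.mem_range.1 ht
    have h1 := key_step hp0 X Y U t (hcontrol t ht')
    have h2 := bprime_step hp0 X Y U t (hplant t ht')
    rw [hb]
    linarith
  rw [Finset.sum_congr rfl key, Finset.sum_add_distrib, Finset.sum_range_sub']
  have hb0 : b 0 = 0 := by
    haveI : Subsingleton (Fin 0 → 𝒳) := ⟨fun f g => funext fun i => i.elim0⟩
    exact cmi_eq_zero_of_subsingleton hp0 _ _ _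
  have hbT : 0 ≤ b T := cmi_nonneg hp0 hp1 _ _ _
  linarith
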